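/- Let S be a subset of X with |S| = k ≥ 1. If k ≥ n, then there exist a profile u and an index vector b of gauge ⌈k/n⌉ such that the set of approval voting winners G_A(u,b) is exactly S. -/

import Mathlib

open Finset

/-- The approval voting score `A_S(x,u,b)`: the number of individuals `i` who
have `x` among the top `b i` ranks of their ordering.  A profile assigns to
each individual `i` a rank equivalence `u i : Fin m ≃ Fin m` (rank `0` is the
top), so `x` is among the top `b i` alternatives of `u i` iff
`((u i) x).val < b i`. -/
def approvalScore {m n : ℕ} (u : Fin n → (Fin m ≃ Fin m)) (b : Fin n → ℕ)
    (x : Fin m) : ℕ :=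
  (univ.filter (fun i : Fin n => ((u i) x).val < b i)).card

/-- The approval voting choice set `G_A(u,b)`: alternatives with maximal
approval voting score. -/
def approvalSet {m n : ℕ} (u : Fin n → (Fin m ≃ Fin m)) (b : Fin n → ℕ) :
    Finset (Fin m) :=
  univ.filter (fun x => ∀ y : Fin m, approvalScore u b y ≤ approvalScore u b x)

/-- A permutation of `Fin m` placing the elements of `T` on top. -/
lemma exists_perm (m : ℕ) (T : Finset (Fin m)) :
    ∃ σ : Fin m ≃ Fin m, ∀ x, ((σ x).val < T.card ↔ x ∈ T) := by
  classical
  have ht : T.card ≤ m := by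
    simpa using T.card_le_univ
  have hc : Tᶜ.card = m - T.card := by
    simp [Finset.card_compl]
  let e1 : Fin m ≃ {x // x ∈ T} ⊕ {x // ¬ x ∈ T} := (Equiv.sumCompl (· ∈ T)).symm
  let eC : {x // ¬ x ∈ T} ≃ Fin (m - T.card) :=
    (Equiv.subtypeEquivRight (fun x => (Finset.mem_compl (s := T)).symm)).trans
      (Tᶜ.equivFin.trans (finCongr hc))
  let σ : Fin m ≃ Fin m :=
    e1.trans ((Equiv.sumCongr T.equivFin eC).trans
      (finSumFinEquiv.trans (finCongr (by omega))))
  refine ⟨σ, fun x => ?_⟩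
  by_cases hx : x ∈ T
  · simp only [σ, e1, Equiv.trans_apply, Equiv.sumCompl_symm_apply_of_pos hx,
      Equiv.sumCongr_apply, Sum.map_inl, finSumFinEquiv_apply_left, finCongr_apply,
      Fin.coe_cast, Fin.coe_castAdd]
    exact iff_of_true (Fin.is_lt _) hx
  · simp only [σ, e1, Equiv.trans_apply, Equiv.sumCompl_symm_apply_of_neg hx,
      Equiv.sumCongr_apply, Sum.map_inr, finSumFinEquiv_apply_right, finCongr_apply,
      Fin.coe_cast, Fin.coe_natAdd]
    exact iff_of_false (by omega) hx

lemma count_zero_mod (k n : ℕ) (hk : 1 ≤ k) (hn : 0 < n) :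
    ((range k).filter (fun j => j % n = 0)).card = (k - 1) / n + 1 := by
  have himg : (range k).filter (fun j => j % n = 0)
      = (range ((k - 1) / n + 1)).image (fun l => n * l) := by
    ext j
    simp only [mem_filter, mem_range, mem_image]
    constructor
    · rintro ⟨hjk, hmod⟩
      refine ⟨j / n, ?_, ?_⟩
      · have : j / n ≤ (k - 1) / n := Nat.div_le_div_right (by omega)
        omega
      · have := Nat.div_add_mod j n
        omega
    · rintro ⟨l, hl, rfl⟩
      have h1 : (k - 1) / n * n ≤ k - 1 := Nat.div_mul_le_self _ _
      have h2 : l * n ≤ (k - 1) / n * n := Nat.mul_le_mul_right n (by omega)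
      constructor
      · have : n * l = l * n := Nat.mul_comm _ _
        omega
      · exact Nat.mul_mod_right n l
  rw [himg, Finset.card_image_of_injective _ (fun a b h => by
    exact Nat.eq_of_mul_eq_mul_left hn h), Finset.card_range]

lemma count_mod_le (k n i : ℕ) (hn : 0 < n) :
    ((range k).filter (fun j => j % n = i)).card
      ≤ ((range k).filter (fun j => j % n = 0)).card := by
  apply Finset.card_le_card_of_injOn (fun j => j - i)
  · intro j hj
    simp only [mem_coe, mem_filter, mem_range] at hj ⊢
    obtain ⟨hjk, hmod⟩ := hj
    have hij : i ≤ j := hmod ▸ Nat.mod_le j n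
    have hdm := Nat.div_add_mod j n
    have : j - i = n * (j / n) := by omega
    exact ⟨by omega, by rw [this]; exact Nat.mul_mod_right n _⟩
  · intro a ha b hb hab
    simp only [mem_filter, mem_range, coe_filter] at ha hb
    dsimp only at hab
    have hia : i ≤ a := ha.2 ▸ Nat.mod_le a n
    have hib : i ≤ b := hb.2 ▸ Nat.mod_le b n
    omega

lemma ceil_eq (k n : ℕ) (hk : 1 ≤ k) (hn : 0 < n) :
    (((k - 1) / n + 1 : ℕ) : ℤ) = ⌈(k : ℚ) / (n : ℚ)⌉ := by
  have hd := Nat.div_add_mod (k - 1) n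
  have hm : (k - 1) % n < n := Nat.mod_lt _ hn
  set d := (k - 1) / n with hdd
  have hnQ : (0 : ℚ) < n := by exact_mod_cast hn
  symm
  rw [Int.ceil_eq_iff]
  constructor
  · push_cast
    have : (n : ℚ) * d < k := by
      have : n * d < k := by omega
      exact_mod_cast this
    have h2 : (d : ℚ) < k / n := by
      rw [lt_div_iff₀ hnQ]; linarith
    linarith
  · push_cast
    rw [div_le_iff₀ hnQ]
    have : (k : ℚ) ≤ n * d + n := by
      have : k ≤ n * d + n := by omega
      exact_mod_cast this
    linarith

lemma fin_filter_card (k n i : ℕ) :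
    ((univ : Finset (Fin k)).filter (fun j => j.val % n = i)).card
      = ((range k).filter (fun j => j % n = i)).card := by
  apply Finset.card_nbij (fun j => j.val)
  · intro j hj
    simp only [mem_coe, mem_filter, mem_univ, true_and, mem_range] at hj ⊢
    exact ⟨j.isLt, hj⟩
  · intro a _ b _ h
    exact Fin.val_injective h
  · intro j hj
    simp only [mem_coe, mem_filter, mem_range, Set.mem_image] at hj ⊢
    exact ⟨⟨j, hj.1⟩, by simp [hj.2], rfl⟩

/-- If `S ⊆ X` with `|S| = k ≥ 1` and `k ≥ n`, then there are a profile `u`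
and an index vector `b` (each component in `{1,…,m}`) of gauge `⌈k/n⌉` with
`G_A(u,b) = S`. -/
theorem approval_range_k_ge_n (m n : ℕ) (hm : 3 ≤ m) (hn : 2 ≤ n)
    (S : Finset (Fin m)) (k : ℕ) (hcard : S.card = k) (hk : 1 ≤ k) (hkn : n ≤ k) :
    ∃ (u : Fin n → (Fin m ≃ Fin m)) (b : Fin n → ℕ),
      (∀ i : Fin n, 1 ≤ b i ∧ b i ≤ m) ∧
      (((univ.sup b : ℕ) : ℤ) = ⌈(k : ℚ) / (n : ℚ)⌉) ∧
      approvalSet u b = S := by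
  classical
  have hn0 : 0 < n := by omega
  -- enumeration of S
  let E := S.equivFinOfCardEq hcard
  let f : Fin k → Fin m := fun j => (E.symm j : Fin m)
  have hfS : ∀ j, f j ∈ S := fun j => (E.symm j).2
  have hfinj : Function.Injective f := fun a b h => by
    have : E.symm a = E.symm b := Subtype.ext h
    exact E.symm.injective this
  have hfsurj : ∀ x ∈ S, ∃ j, f j = x := fun x hx => ⟨E ⟨x, hx⟩, by simp [f]⟩
  -- groups of alternatives, voter i approves exactly T i
  let T : Fin n → Finset (Fin m) :=
    fun i => (univ.filter (fun j : Fin k => j.val % n = i.val)).image f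
  let b : Fin n → ℕ := fun i => (T i).card
  choose u hu using fun i => exists_perm m (T i)
  have hb : ∀ i, b i = ((range k).filter (fun j => j % n = i.val)).card := by
    intro i
    show (T i).card = _
    rw [Finset.card_image_of_injective _ hfinj, fin_filter_card]
  have hmemT : ∀ i x, x ∈ T i ↔ ∃ j : Fin k, j.val % n = i.val ∧ f j = x := by
    intro i x
    simp only [T, mem_image, mem_filter, mem_univ, true_and]
  -- score computation
  have hscore : ∀ x, approvalScore u b x = (univ.filter (fun i => x ∈ T i)).card := by
    intro x
    unfold approvalScore
    congr 1
    apply Finset.filter_congr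
    intro i _
    simpa using hu i x
  have hscoreS : ∀ j : Fin k, approvalScore u b (f j) = 1 := by
    intro j
    rw [hscore]
    have : (univ.filter (fun i => f j ∈ T i))
        = {(⟨j.val % n, Nat.mod_lt _ hn0⟩ : Fin n)} := by
      ext i
      simp only [mem_filter, mem_univ, true_and, mem_singleton, hmemT]
      constructor
      · rintro ⟨j', hj', hfj⟩
        have : j' = j := hfinj hfj
        subst this
        exact Fin.ext hj'.symm
      · rintro rfl
        exact ⟨j, rfl, rfl⟩
    rw [this, card_singleton]
  have hscoreN : ∀ x, x ∉ S → approvalScore u b x = 0 := by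
    intro x hx
    rw [hscore]
    convert Finset.card_empty
    ext i
    simp only [mem_filter, mem_univ, true_and, notMem_empty, iff_false, hmemT]
    rintro ⟨j, _, rfl⟩
    exact hx (hfS j)
  have hscore_le : ∀ x, approvalScore u b x ≤ 1 := by
    intro x
    by_cases hx : x ∈ S
    · obtain ⟨j, rfl⟩ := hfsurj x hx
      exact le_of_eq (hscoreS j)
    · rw [hscoreN x hx]; omega
  refine ⟨u, b, ?_, ?_, ?_⟩
  · -- bounds on b
    intro i
    constructor
    · have : f ⟨i.val, lt_of_lt_of_le i.isLt hkn⟩ ∈ T i := by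
        rw [hmemT]
        exact ⟨⟨i.val, lt_of_lt_of_le i.isLt hkn⟩, Nat.mod_eq_of_lt i.isLt, rfl⟩
      exact Finset.card_pos.mpr ⟨_, this⟩
    · calc (T i).card ≤ (univ : Finset (Fin m)).card := card_le_card (subset_univ _)
        _ = m := by simp
  · -- gauge
    have hsup : univ.sup b = b ⟨0, hn0⟩ := by
      apply le_antisymm
      · apply Finset.sup_le
        intro i _
        rw [hb, hb]
        exact count_mod_le k n i.val hn0
      · exact Finset.le_sup (mem_univ _)
    rw [hsup, hb, count_zero_mod k n hk hn0, ceil_eq k n hk hn0]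
  · -- the choice set is S
    ext x
    simp only [approvalSet, mem_filter, mem_univ, true_and]
    constructor
    · intro hmax
      by_contra hx
      obtain ⟨s0, hs0⟩ := Finset.card_pos.mp (by omega : 0 < S.card)
      obtain ⟨j, rfl⟩ := hfsurj s0 hs0
      have h1 := hmax (f j)
      rw [hscoreS j, hscoreN x hx] at h1
      omega
    · intro hx y
      obtain ⟨j, rfl⟩ := hfsurj x hx
      rw [hscoreS j]
      exact hscore_le y
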